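/- Let G be a graph consisting of two cycles sharing exactly one vertex v, with edge sets {g1,…,gn} and {f1,…,fm} in cyclic order, where g1, gn, f1, fm are all incident to v. If L is a list assignment with every list of size at least 2 and |L(gn)| ≥ 4 and |L(fm)| ≥ 4, then G has a proper L-edge-colouring. -/

import Mathlib

open SimpleGraph Sum

/-- Two edges of `G` are adjacent if they are distinct edges sharing a vertex. -/
def EdgeAdj {V : Type*} (G : SimpleGraph V) (e f : Sym2 V) : Prop :=
  e ∈ G.edgeSet ∧ f ∈ G.edgeSet ∧ e ≠ f ∧ ∃ v, v ∈ e ∧ v ∈ f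

/-- A proper edge-colouring of `G` choosing each edge's colour from its list. -/
def IsListEdgeColoring {V : Type*} (G : SimpleGraph V) (L : Sym2 V → Finset ℕ)
    (C : Sym2 V → ℕ) : Prop :=
  (∀ e ∈ G.edgeSet, C e ∈ L e) ∧ ∀ e f, EdgeAdj G e f → C e ≠ C f

/-- Vertices of the second cycle of the figure-eight graph: `bv n 0 = 0` is the
shared vertex, and `bv n j = n + j - 1` for `1 ≤ j`. -/
def bv (n j : ℕ) : ℕ := if j = 0 then 0 else n + j - 1

namespace Stmt4Aux


lemma avail {S : Finset ℕ} (hS : S.Nonempty) {d : ℕ} (h : S ≠ {d}) :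
    ∃ t ∈ S, t ≠ d := by
  obtain ⟨u, hu⟩ := hS
  by_cases hud : u = d
  · subst hud
    by_contra hc
    push_neg at hc
    exact h (Finset.eq_singleton_iff_unique_mem.mpr ⟨hu, hc⟩)
  · exact ⟨u, hu, hud⟩

lemma exists_ne_mem {S : Finset ℕ} (h : 2 ≤ S.card) (a : ℕ) : ∃ x ∈ S, x ≠ a :=
  Finset.exists_mem_ne (by omega) a

lemma cand_ne {D : Finset ℕ} (hD : 4 ≤ D.card) (p q : ℕ) (T : Finset ℕ) :
    ∃ d ∈ D, d ≠ p ∧ d ≠ q ∧ T ≠ {d} := by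
  have hsub : 2 ≤ (D \ {p, q}).card := by
    have h1 := Finset.le_card_sdiff ({p, q} : Finset ℕ) D
    have h2 : ({p, q} : Finset ℕ).card ≤ 2 :=
      (Finset.card_insert_le _ _).trans (by simp)
    omega
  obtain ⟨d1, hd1, d2, hd2, hne⟩ := Finset.one_lt_card.mp (by omega : 1 < (D \ {p, q}).card)
  simp only [Finset.mem_sdiff, Finset.mem_insert, Finset.mem_singleton] at hd1 hd2
  push_neg at hd1 hd2
  by_cases hT : T = {d1}
  · exact ⟨d2, hd2.1, hd2.2.1, hd2.2.2, by rw [hT]; simp [hne]⟩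
  · exact ⟨d1, hd1.1, hd1.2.1, hd1.2.2, hT⟩

lemma card_le_three (a b c : ℕ) : ({a, b, c} : Finset ℕ).card ≤ 3 :=
  (Finset.card_insert_le _ _).trans (Nat.succ_le_succ
    ((Finset.card_insert_le _ _).trans (by simp)))

lemma card_lt_four {a b c d : ℕ}
    (h : a = b ∨ a = c ∨ a = d ∨ b = c ∨ b = d ∨ c = d) :
    ({a, b, c, d} : Finset ℕ).card ≤ 3 := by
  rcases h with h | h | h | h | h | h <;> subst h
  · exact (Finset.card_le_card (by intro x hx; simp at hx ⊢; tauto)).trans (card_le_three a c d)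
  · exact (Finset.card_le_card (by intro x hx; simp at hx ⊢; tauto)).trans (card_le_three a b d)
  · exact (Finset.card_le_card (by intro x hx; simp at hx ⊢; tauto)).trans (card_le_three a b c)
  · exact (Finset.card_le_card (by intro x hx; simp at hx ⊢; tauto)).trans (card_le_three a b d)
  · exact (Finset.card_le_card (by intro x hx; simp at hx ⊢; tauto)).trans (card_le_three a b c)
  · exact (Finset.card_le_card (by intro x hx; simp at hx ⊢; tauto)).trans (card_le_three a b c)

lemma four_distinct {a b c d : ℕ} (h : 4 ≤ ({a, b, c, d} : Finset ℕ).card) :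
    a ≠ b ∧ a ≠ c ∧ a ≠ d ∧ b ≠ c ∧ b ≠ d ∧ c ≠ d := by
  refine ⟨?_, ?_, ?_, ?_, ?_, ?_⟩ <;> intro heq <;>
    have := card_lt_four (a := a) (b := b) (c := c) (d := d) (by tauto) <;> omega


/-- The set of achievable colours for the `j`-th edge of a path of edges with
lists `M`, where the edge before edge `0` has colour `σ`. -/
def chainT (M : ℕ → Finset ℕ) (σ : ℕ) : ℕ → Finset ℕ
  | 0 => M 0 \ {σ}
  | j + 1 => if (chainT M σ j).card ≤ 1 then M (j + 1) \ chainT M σ j else M (j + 1)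

lemma chainT_nonempty (M : ℕ → Finset ℕ) (σ : ℕ) :
    ∀ j, (∀ i ≤ j, 2 ≤ (M i).card) → (chainT M σ j).Nonempty := by
  intro j
  induction j with
  | zero =>
    intro hM
    rw [← Finset.card_pos, chainT]
    have h1 := Finset.le_card_sdiff ({σ} : Finset ℕ) (M 0)
    have h2 := hM 0 le_rfl
    simp at h1
    omega
  | succ j ih =>
    intro hM
    rw [← Finset.card_pos, chainT]
    split_ifs with hc
    · have h1 := Finset.le_card_sdiff (chainT M σ j) (M (j + 1))
      have h2 := hM (j + 1) le_rfl
      omega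
    · have h2 := hM (j + 1) le_rfl
      omega

lemma chainT_realize (M : ℕ → Finset ℕ) (σ : ℕ) :
    ∀ j, (∀ i ≤ j, 2 ≤ (M i).card) → ∀ t ∈ chainT M σ j,
      ∃ cc : ℕ → ℕ, cc 0 ≠ σ ∧ (∀ i ≤ j, cc i ∈ M i) ∧
        (∀ i, i < j → cc i ≠ cc (i + 1)) ∧ cc j = t := by
  intro j
  induction j with
  | zero =>
    intro _ t ht
    rw [chainT, Finset.mem_sdiff, Finset.mem_singleton] at ht
    refine ⟨fun _ => t, ht.2, ?_, ?_, rfl⟩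
    · intro i hi
      have : i = 0 := by omega
      subst this
      exact ht.1
    · intro i hi
      omega
  | succ j ih =>
    intro hM t ht
    have hMj : ∀ i ≤ j, 2 ≤ (M i).card := fun i hi => hM i (by omega)
    have hex : t ∈ M (j + 1) ∧ ∃ t' ∈ chainT M σ j, t' ≠ t := by
      rw [chainT] at ht
      split_ifs at ht with hc
      · rw [Finset.mem_sdiff] at ht
        obtain ⟨t', ht'⟩ := chainT_nonempty M σ j hMj
        exact ⟨ht.1, t', ht', fun h => ht.2 (h ▸ ht')⟩
      · push_neg at hc
        have : ((chainT M σ j) \ {t}).Nonempty := by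
          rw [← Finset.card_pos]
          have h1 := Finset.le_card_sdiff ({t} : Finset ℕ) (chainT M σ j)
          simp at h1
          omega
        obtain ⟨t', ht'⟩ := this
        rw [Finset.mem_sdiff, Finset.mem_singleton] at ht'
        exact ⟨ht, t', ht'.1, ht'.2⟩
    obtain ⟨htM, t', ht', htt⟩ := hex
    obtain ⟨cc, h0, hmem, hcons, hlast⟩ := ih hMj t' ht'
    refine ⟨fun i => if i ≤ j then cc i else t, by simpa using h0, ?_, ?_, by simp⟩
    · intro i hi
      by_cases h : i ≤ j
      · simpa [h] using hmem i h
      · have : i = j + 1 := by omega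
        simp [this, htM]
    · intro i hi
      by_cases h : i < j
      · have h1 : i ≤ j := by omega
        have h2 : i + 1 ≤ j := by omega
        simp only [h1, h2, if_pos]
        exact hcons i h
      · have hij : i = j := by omega
        subst hij
        simp only []
        rw [if_pos (le_refl i), if_neg (Nat.not_succ_le_self i), hlast]
        exact fun hc => htt hc

lemma chainT_singleton (M : ℕ → Finset ℕ) (σ σ' : ℕ) (hσ : σ ≠ σ') :
    ∀ j, (∀ i ≤ j, 2 ≤ (M i).card) → ∀ u u', chainT M σ j = {u} → chainT M σ' j = {u'} →
      (u = σ ∧ u' = σ') ∨ (u = σ' ∧ u' = σ) := by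
  intro j
  induction j with
  | zero =>
    intro hM u u' hu hu'
    rw [chainT] at hu hu'
    have huM : u ∈ M 0 ∧ u ≠ σ := by
      have : u ∈ M 0 \ {σ} := hu ▸ Finset.mem_singleton_self u
      simpa [Finset.mem_sdiff] using this
    have huM' : u' ∈ M 0 ∧ u' ≠ σ' := by
      have : u' ∈ M 0 \ {σ'} := hu' ▸ Finset.mem_singleton_self u'
      simpa [Finset.mem_sdiff] using this
    have hsub : M 0 ⊆ {σ, u} := by
      intro x hx
      by_cases hxσ : x = σ
      · simp [hxσ]
      · have : x ∈ M 0 \ {σ} := by simp [hx, hxσ]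
        rw [hu] at this
        simp at this
        simp [this]
    have hσ'M : σ' ∈ M 0 := by
      by_contra hc
      have : M 0 \ {σ'} = M 0 := Finset.sdiff_eq_self_of_disjoint (by simpa using hc)
      rw [this] at hu'
      have := hM 0 le_rfl
      rw [hu'] at this
      simp at this
    have : σ' ∈ ({σ, u} : Finset ℕ) := hsub hσ'M
    simp at this
    rcases this with h | h
    · exact absurd h.symm hσ
    · -- σ' = u; then u' = σ similarly
      right
      refine ⟨h.symm, ?_⟩
      have hσM : σ ∈ M 0 := by
        by_contra hc
        have : M 0 \ {σ} = M 0 := Finset.sdiff_eq_self_of_disjoint (by simpa using hc)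
        rw [this] at hu
        have := hM 0 le_rfl
        rw [hu] at this
        simp at this
      have : σ ∈ M 0 \ {σ'} := by simp [hσM, hσ]
      rw [hu'] at this
      simp at this
      exact this.symm
  | succ j ih =>
    intro hM u u' hu hu'
    have hMj : ∀ i ≤ j, 2 ≤ (M i).card := fun i hi => hM i (by omega)
    rw [chainT] at hu hu'
    -- first show the previous level is a singleton on both sides
    have hcase : (chainT M σ j).card ≤ 1 := by
      by_contra hc
      rw [if_neg hc] at hu
      have := hM (j + 1) le_rfl
      rw [hu] at this
      simp at this
    have hcase' : (chainT M σ' j).card ≤ 1 := by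
      by_contra hc
      rw [if_neg hc] at hu'
      have := hM (j + 1) le_rfl
      rw [hu'] at this
      simp at this
    rw [if_pos hcase] at hu
    rw [if_pos hcase'] at hu'
    have hone : (chainT M σ j).card = 1 := by
      have := (chainT_nonempty M σ j hMj).card_pos
      omega
    have hone' : (chainT M σ' j).card = 1 := by
      have := (chainT_nonempty M σ' j hMj).card_pos
      omega
    obtain ⟨v, hv⟩ := Finset.card_eq_one.mp hone
    obtain ⟨v', hv'⟩ := Finset.card_eq_one.mp hone'
    rw [hv] at hu
    rw [hv'] at hu'
    have hIH := ih hMj v v' hv hv'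
    have hvv' : v ≠ v' := by
      rcases hIH with ⟨h1, h2⟩ | ⟨h1, h2⟩ <;> omega
    -- M (j+1) = {v, u} = {v', u'}
    have huM : u ∈ M (j + 1) ∧ u ≠ v := by
      have : u ∈ M (j + 1) \ {v} := hu ▸ Finset.mem_singleton_self u
      simpa [Finset.mem_sdiff] using this
    have huM' : u' ∈ M (j + 1) ∧ u' ≠ v' := by
      have : u' ∈ M (j + 1) \ {v'} := hu' ▸ Finset.mem_singleton_self u'
      simpa [Finset.mem_sdiff] using this
    have hv'M : v' ∈ M (j + 1) := by
      by_contra hc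
      have : M (j + 1) \ {v'} = M (j + 1) := Finset.sdiff_eq_self_of_disjoint (by simpa using hc)
      rw [this] at hu'
      have := hM (j + 1) le_rfl
      rw [hu'] at this
      simp at this
    have hvM : v ∈ M (j + 1) := by
      by_contra hc
      have : M (j + 1) \ {v} = M (j + 1) := Finset.sdiff_eq_self_of_disjoint (by simpa using hc)
      rw [this] at hu
      have := hM (j + 1) le_rfl
      rw [hu] at this
      simp at this
    have huv' : u = v' := by
      have : v' ∈ M (j + 1) \ {v} := by simp [hv'M, hvv'.symm]
      rw [hu] at this
      simp at this
      exact this.symm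
    have hu'v : u' = v := by
      have : v ∈ M (j + 1) \ {v'} := by simp [hvM, hvv']
      rw [hu'] at this
      simp at this
      exact this.symm
    rcases hIH with ⟨h1, h2⟩ | ⟨h1, h2⟩
    · right; exact ⟨huv' ▸ h2, hu'v ▸ h1⟩
    · left; exact ⟨huv' ▸ h2, hu'v ▸ h1⟩

/-- The key endgame lemma: choosing the four colours at the shared vertex. -/
lemma endgame (B C D E : Finset ℕ) (TG TF : ℕ → Finset ℕ)
    (hB : 2 ≤ B.card) (hC : 2 ≤ C.card) (hD : 4 ≤ D.card) (hE : 4 ≤ E.card)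
    (hTG : ∀ σ, (TG σ).Nonempty) (hTF : ∀ σ, (TF σ).Nonempty)
    (hGs : ∀ σ σ', σ ≠ σ' → ∀ u u', TG σ = {u} → TG σ' = {u'} →
      (u = σ ∧ u' = σ') ∨ (u = σ' ∧ u' = σ))
    (hFs : ∀ σ σ', σ ≠ σ' → ∀ u u', TF σ = {u} → TF σ' = {u'} →
      (u = σ ∧ u' = σ') ∨ (u = σ' ∧ u' = σ)) :
    ∃ b c d e : ℕ, b ∈ B ∧ c ∈ C ∧ d ∈ D ∧ e ∈ E ∧
      b ≠ c ∧ b ≠ d ∧ b ≠ e ∧ c ≠ d ∧ c ≠ e ∧ d ≠ e ∧ TG b ≠ {d} ∧ TF c ≠ {e} := by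
  obtain ⟨b, hbB⟩ := Finset.card_pos.mp (by omega : 0 < B.card)
  obtain ⟨c, hcC, hcb⟩ := exists_ne_mem hC b
  have hbc : b ≠ c := fun h => hcb h.symm
  by_cases H : ∃ d, d ∈ D ∧ d ≠ b ∧ d ≠ c ∧ TG b ≠ {d} ∧
      ∃ e, e ∈ E ∧ e ≠ b ∧ e ≠ c ∧ e ≠ d ∧ TF c ≠ {e}
  · obtain ⟨d, hdD, hdb, hdc, hdT, e, heE, heb, hec, hed, heT⟩ := H
    exact ⟨b, c, d, e, hbB, hcC, hdD, heE, hbc, hdb.symm, heb.symm, hdc.symm,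
      hec.symm, hed.symm, hdT, heT⟩
  push_neg at H
  obtain ⟨x, hxD, hxb, hxc, hxT⟩ := cand_ne hD b c (TG b)
  obtain ⟨e0, he0E, he0b, he0c, he0T⟩ := cand_ne hE b c (TF c)
  have he0x : e0 = x := by
    by_contra hne
    exact he0T (H x hxD hxb hxc hxT e0 he0E he0b he0c hne)
  rw [he0x] at he0E he0b he0c he0T
  -- every valid d is x, every valid e is x
  have hdx : ∀ d, d ∈ D → d ≠ b → d ≠ c → TG b ≠ {d} → d = x := by
    intro d hd h1 h2 h3
    by_contra hne
    exact he0T (H d hd h1 h2 h3 x he0E he0b he0c (fun h => hne h.symm))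
  have hex : ∀ e, e ∈ E → e ≠ b → e ≠ c → TF c ≠ {e} → e = x := by
    intro e he h1 h2 h3
    by_contra hne
    exact h3 (H x hxD hxb hxc hxT e he h1 h2 hne)
  -- TG b and TF c are singletons
  have hDbc : 2 ≤ (D \ {b, c}).card := by
    have h1 := Finset.le_card_sdiff ({b, c} : Finset ℕ) D
    have h2 : ({b, c} : Finset ℕ).card ≤ 2 :=
      (Finset.card_insert_le _ _).trans (by simp)
    omega
  have hEbc : 2 ≤ (E \ {b, c}).card := by
    have h1 := Finset.le_card_sdiff ({b, c} : Finset ℕ) E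
    have h2 : ({b, c} : Finset ℕ).card ≤ 2 :=
      (Finset.card_insert_le _ _).trans (by simp)
    omega
  have hTGb : ∃ τ, TG b = {τ} := by
    by_contra hc2
    push_neg at hc2
    obtain ⟨d1, hd1, d2, hd2, hne⟩ := Finset.one_lt_card.mp (by omega : 1 < (D \ {b, c}).card)
    simp only [Finset.mem_sdiff, Finset.mem_insert, Finset.mem_singleton] at hd1 hd2
    push_neg at hd1 hd2
    have e1 := hdx d1 hd1.1 hd1.2.1 hd1.2.2 (hc2 d1)
    have e2 := hdx d2 hd2.1 hd2.2.1 hd2.2.2 (hc2 d2)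
    exact hne (e1.trans e2.symm)
  have hTFc : ∃ υ, TF c = {υ} := by
    by_contra hc2
    push_neg at hc2
    obtain ⟨d1, hd1, d2, hd2, hne⟩ := Finset.one_lt_card.mp (by omega : 1 < (E \ {b, c}).card)
    simp only [Finset.mem_sdiff, Finset.mem_insert, Finset.mem_singleton] at hd1 hd2
    push_neg at hd1 hd2
    have e1 := hex d1 hd1.1 hd1.2.1 hd1.2.2 (hc2 d1)
    have e2 := hex d2 hd2.1 hd2.2.1 hd2.2.2 (hc2 d2)
    exact hne (e1.trans e2.symm)
  obtain ⟨τ, hτ⟩ := hTGb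
  obtain ⟨υ, hυ⟩ := hTFc
  -- D = {b, c, τ, x} and E = {b, c, υ, x}
  have hDsub : D ⊆ {b, c, τ, x} := by
    intro d hd
    simp only [Finset.mem_insert, Finset.mem_singleton]
    by_contra hcon
    push_neg at hcon
    obtain ⟨h1, h2, h3, h4⟩ := hcon
    exact h4 (hdx d hd h1 h2 (by rw [hτ]; exact fun hh => h3 (Finset.singleton_injective hh).symm))
  have hEsub : E ⊆ {b, c, υ, x} := by
    intro e he
    simp only [Finset.mem_insert, Finset.mem_singleton]
    by_contra hcon
    push_neg at hcon
    obtain ⟨h1, h2, h3, h4⟩ := hcon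
    exact h4 (hex e he h1 h2 (by rw [hυ]; exact fun hh => h3 (Finset.singleton_injective hh).symm))
  have hDeq : D = {b, c, τ, x} := by
    apply Finset.eq_of_subset_of_card_le hDsub
    calc ({b, c, τ, x} : Finset ℕ).card ≤ 4 := by
          refine (Finset.card_insert_le _ _).trans (Nat.succ_le_succ ?_)
          exact card_le_three c τ x
      _ ≤ D.card := hD
  have hEeq : E = {b, c, υ, x} := by
    apply Finset.eq_of_subset_of_card_le hEsub
    calc ({b, c, υ, x} : Finset ℕ).card ≤ 4 := by
          refine (Finset.card_insert_le _ _).trans (Nat.succ_le_succ ?_)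
          exact card_le_three c υ x
      _ ≤ E.card := hE
  obtain ⟨hbc', hbτ, hbx, hcτ, hcx, hτx⟩ := four_distinct (hDeq ▸ hD)
  obtain ⟨_, hbυ, _, hcυ, _, hυx⟩ := four_distinct (hEeq ▸ hE)
  have hτD : τ ∈ D := by rw [hDeq]; simp
  have hbE : b ∈ E := by rw [hEeq]; simp
  have hcD : c ∈ D := by rw [hDeq]; simp
  have hcE : c ∈ E := by rw [hEeq]; simp
  have hυE : υ ∈ E := by rw [hEeq]; simp
  have hxE : x ∈ E := by rw [hEeq]; simp
  -- get an alternative b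
  obtain ⟨b2, hb2B, hb2b⟩ := exists_ne_mem hB b
  by_cases hb2c : b2 = c
  · have hcB : c ∈ B := hb2c ▸ hb2B
    obtain ⟨c2, hc2C, hc2c⟩ := exists_ne_mem hC c
    by_cases hc2b : c2 = b
    · have hbC : b ∈ C := hc2b ▸ hc2C
      -- case B-B: swap the roles of b and c
      refine ⟨c, b, τ, x, hcB, hbC, hτD, hxE, hbc.symm, hcτ, hcx, hbτ, hbx, hτx, ?_, ?_⟩
      · intro heq
        rcases hGs b c hbc τ τ hτ heq with ⟨h1, _⟩ | ⟨h1, _⟩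
        · exact hbτ h1.symm
        · exact hcτ h1.symm
      · intro heq
        rcases hFs c b hbc.symm υ x hυ heq with ⟨_, h2⟩ | ⟨_, h2⟩
        · exact hbx h2.symm
        · exact hcx h2.symm
    · by_cases hc2x : c2 = x
      · -- case B-A2
        refine ⟨b, c2, c, υ, hbB, hc2C, hcD, hυE, ?_, hbc, hbυ,
          hc2c, ?_, hcυ, ?_, ?_⟩
        · rw [hc2x]; exact hbx
        · rw [hc2x]; exact fun h => hυx h.symm
        · rw [hτ]; intro h; exact hcτ (Finset.singleton_injective h).symm
        · rw [hc2x]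
          intro heq
          rcases hFs c x hcx υ υ hυ heq with ⟨h1, _⟩ | ⟨h1, _⟩
          · exact hcυ h1.symm
          · exact hυx h1
      · -- case B-A1
        obtain ⟨e1, he1E, he1b, he1c2, he1T⟩ := cand_ne hE b c2 (TF c2)
        by_cases he1c : e1 = c
        · refine ⟨b, c2, x, e1, hbB, hc2C, hxD, he1E, fun h => hc2b h.symm,
            hbx, fun h => he1b h.symm, hc2x,
            fun h => he1c2 h.symm, ?_, hxT, he1T⟩
          rw [he1c]; exact hxc
        · refine ⟨b, c2, c, e1, hbB, hc2C, hcD, he1E, fun h => hc2b h.symm,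
            hbc, fun h => he1b h.symm, hc2c, fun h => he1c2 h.symm,
            fun h => he1c h.symm, ?_, he1T⟩
          rw [hτ]; intro h; exact hcτ (Finset.singleton_injective h).symm
  · by_cases hb2x : b2 = x
    · -- case A2
      refine ⟨b2, c, τ, b, hb2B, hcC, hτD, hbE, hb2c, ?_, hb2b, hcτ,
        hbc.symm, fun h => hbτ h.symm, ?_, ?_⟩
      · rw [hb2x]; exact fun h => hτx h.symm
      · intro heq
        rw [hb2x] at heq
        rcases hGs b x hbx τ τ hτ heq with ⟨h1, _⟩ | ⟨h1, _⟩
        · exact hbτ h1.symm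
        · exact hτx h1
      · rw [hυ]; intro h; exact hbυ (Finset.singleton_injective h).symm
    · -- case A1
      obtain ⟨d1, hd1D, hd1b2, hd1c, hd1T⟩ := cand_ne hD b2 c (TG b2)
      by_cases hd1b : d1 = b
      · refine ⟨b2, c, d1, x, hb2B, hcC, hd1D, hxE, hb2c,
          fun h => hd1b2 h.symm, hb2x, fun h => hd1c h.symm, hcx, ?_, hd1T, ?_⟩
        · rw [hd1b]; exact hbx
        · rw [hυ]; intro h; exact hυx (Finset.singleton_injective h)
      · refine ⟨b2, c, d1, b, hb2B, hcC, hd1D, hbE, hb2c,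
          fun h => hd1b2 h.symm, hb2b, fun h => hd1c h.symm, hbc.symm,
          hd1b, hd1T, ?_⟩
        rw [hυ]; intro h; exact hbυ (Finset.singleton_injective h).symm



def FCol (n b c d e : ℕ) (cg cf : ℕ → ℕ) (x y : ℕ) : ℕ :=
  if x = 0 then (if y = 1 then b else if y = n - 1 then d else if y = n then c else e)
  else if x ≤ n - 2 then cg (x - 1) else cf (x - n)

def CCol (n b c d e : ℕ) (cg cf : ℕ → ℕ) : Sym2 ℕ → ℕ :=
  Sym2.lift ⟨fun x y => FCol n b c d e cg cf (min x y) (max x y),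
    fun x y => by simp only []; rw [min_comm, max_comm]⟩

lemma CCol_mk (n b c d e : ℕ) (cg cf : ℕ → ℕ) (x y : ℕ) :
    CCol n b c d e cg cf s(x, y) = FCol n b c d e cg cf (min x y) (max x y) :=
  Sym2.lift_mk _ _ _


end Stmt4Aux

open Stmt4Aux in
/-- two cycles (lengths `n` and `m`) sharing exactly the vertex `0`,
with edges `gᵢ` (first cycle) and `fⱼ` (second cycle) in cyclic order, where
`gₙ = s(n-1,0)` and `fₘ = s(n+m-2,0)` are incident to the shared vertex.  If all
lists have size at least 2 and `|L(gₙ)| ≥ 4`, `|L(fₘ)| ≥ 4`, then the graph has a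
proper list edge-colouring. -/
theorem stmt4 (n m : ℕ) (hn : 3 ≤ n) (hm : 3 ≤ m)
    (G : SimpleGraph ℕ)
    (hG : G = SimpleGraph.fromEdgeSet
      ({e | ∃ i < n, e = s(i, (i + 1) % n)} ∪
       {e | ∃ j < m, e = s(bv n j, bv n ((j + 1) % m))}))
    (L : Sym2 ℕ → Finset ℕ)
    (hL : ∀ e ∈ G.edgeSet, 2 ≤ (L e).card)
    (hgn : 4 ≤ (L s(n - 1, 0)).card)
    (hfm : 4 ≤ (L s(n + m - 2, 0)).card) :
    ∃ C, IsListEdgeColoring G L C := by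
  classical
  have hGE : G.edgeSet =
      ({e | ∃ i < n, e = s(i, (i + 1) % n)} ∪
       {e | ∃ j < m, e = s(bv n j, bv n ((j + 1) % m))}) \ {e : Sym2 ℕ | e.IsDiag} := by
    rw [hG, SimpleGraph.edgeSet_fromEdgeSet]; rfl
  have hbv0 : bv n 0 = 0 := by simp [bv]
  have hbv : ∀ j, j ≠ 0 → bv n j = n + j - 1 := fun j hj => by simp [bv, hj]
  have memA : ∀ i, i ≤ n - 2 → s(i, i + 1) ∈ G.edgeSet := by
    intro i hi
    rw [hGE]
    refine ⟨Or.inl ⟨i, by omega, ?_⟩, ?_⟩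
    · rw [Nat.mod_eq_of_lt (by omega)]
    · simp only [Set.mem_setOf_eq, Sym2.mk_isDiag_iff]
      omega
  have memB : s(n - 1, 0) ∈ G.edgeSet := by
    rw [hGE]
    refine ⟨Or.inl ⟨n - 1, by omega, ?_⟩, ?_⟩
    · rw [show (n - 1 + 1) % n = 0 from by
        rw [Nat.sub_add_cancel (by omega)]; exact Nat.mod_self n]
    · simp only [Set.mem_setOf_eq, Sym2.mk_isDiag_iff]
      omega
  have memC : s(0, n) ∈ G.edgeSet := by
    rw [hGE]
    refine ⟨Or.inr ⟨0, by omega, ?_⟩, ?_⟩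
    · rw [hbv0, Nat.mod_eq_of_lt (by omega : 0 + 1 < m), hbv 1 one_ne_zero,
        Nat.add_sub_cancel]
    · simp only [Set.mem_setOf_eq, Sym2.mk_isDiag_iff]
      omega
  have memD : ∀ j, j ≤ m - 3 → s(n + j, n + j + 1) ∈ G.edgeSet := by
    intro j hj
    rw [hGE]
    refine ⟨Or.inr ⟨j + 1, by omega, ?_⟩, ?_⟩
    · rw [hbv (j + 1) (by omega), Nat.mod_eq_of_lt (by omega : j + 1 + 1 < m),
        hbv (j + 1 + 1) (by omega), show n + (j + 1) - 1 = n + j from by omega,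
        show n + (j + 1 + 1) - 1 = n + j + 1 from by omega]
    · simp only [Set.mem_setOf_eq, Sym2.mk_isDiag_iff]
      omega
  have memE : s(n + m - 2, 0) ∈ G.edgeSet := by
    rw [hGE]
    refine ⟨Or.inr ⟨m - 1, by omega, ?_⟩, ?_⟩
    · rw [show (m - 1 + 1) % m = 0 from by
        rw [Nat.sub_add_cancel (by omega)]; exact Nat.mod_self m,
        hbv0, hbv (m - 1) (by omega), show n + (m - 1) - 1 = n + m - 2 from by omega]
    · simp only [Set.mem_setOf_eq, Sym2.mk_isDiag_iff]
      omega
  have classify : ∀ e ∈ G.edgeSet,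
      (∃ i, i ≤ n - 2 ∧ e = s(i, i + 1)) ∨ e = s(n - 1, 0) ∨ e = s(0, n) ∨
      (∃ j, j ≤ m - 3 ∧ e = s(n + j, n + j + 1)) ∨ e = s(n + m - 2, 0) := by
    intro e he
    rw [hGE] at he
    obtain ⟨hu, -⟩ := he
    simp only [Set.mem_union, Set.mem_setOf_eq] at hu
    rcases hu with ⟨i, hi, rfl⟩ | ⟨j, hj, rfl⟩
    · by_cases hin : i = n - 1
      · subst hin
        refine Or.inr (Or.inl ?_)
        rw [show (n - 1 + 1) % n = 0 from by
          rw [Nat.sub_add_cancel (by omega)]; exact Nat.mod_self n]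
      · exact Or.inl ⟨i, by omega, by rw [Nat.mod_eq_of_lt (by omega)]⟩
    · by_cases hj0 : j = 0
      · subst hj0
        refine Or.inr (Or.inr (Or.inl ?_))
        rw [hbv0, Nat.mod_eq_of_lt (by omega : 0 + 1 < m), hbv 1 one_ne_zero,
          Nat.add_sub_cancel]
      · by_cases hjm : j = m - 1
        · subst hjm
          refine Or.inr (Or.inr (Or.inr (Or.inr ?_)))
          rw [show (m - 1 + 1) % m = 0 from by
            rw [Nat.sub_add_cancel (by omega)]; exact Nat.mod_self m,
            hbv0, hbv (m - 1) (by omega), show n + (m - 1) - 1 = n + m - 2 from by omega]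
        · refine Or.inr (Or.inr (Or.inr (Or.inl ⟨j - 1, by omega, ?_⟩)))
          rw [hbv j hj0, Nat.mod_eq_of_lt (by omega : j + 1 < m), hbv (j + 1) (by omega),
            show n + j - 1 = n + (j - 1) from by omega,
            show n + (j + 1) - 1 = n + (j - 1) + 1 from by omega]
  -- list-size facts for the two chains
  have hMg : ∀ i ≤ n - 3, 2 ≤ ((fun j => L s(j + 1, j + 1 + 1)) i).card := by
    intro i hi
    exact hL _ (memA (i + 1) (by omega))
  have hMf : ∀ i ≤ m - 3, 2 ≤ ((fun j => L s(n + j, n + j + 1)) i).card := by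
    intro i hi
    exact hL _ (memD i hi)
  -- choose the four colours at the shared vertex
  obtain ⟨cb, c0, cd, ce, hcbB, hc0C, hcdD, hceE, hbc, hbd, hbe, hcd, hce, hde,
      hTGne, hTFne⟩ :=
    endgame (L s(0, 0 + 1)) (L s(0, n)) (L s(n - 1, 0)) (L s(n + m - 2, 0))
      (fun σ => chainT (fun j => L s(j + 1, j + 1 + 1)) σ (n - 3))
      (fun σ => chainT (fun j => L s(n + j, n + j + 1)) σ (m - 3))
      (hL _ (memA 0 (by omega))) (hL _ memC) hgn hfm
      (fun σ => chainT_nonempty _ σ (n - 3) hMg)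
      (fun σ => chainT_nonempty _ σ (m - 3) hMf)
      (fun σ σ' hσ u u' h1 h2 => chainT_singleton _ σ σ' hσ (n - 3) hMg u u' h1 h2)
      (fun σ σ' hσ u u' h1 h2 => chainT_singleton _ σ σ' hσ (m - 3) hMf u u' h1 h2)
  -- realize the two chains
  obtain ⟨t, htT, htd⟩ := avail (chainT_nonempty _ cb (n - 3) hMg) hTGne
  obtain ⟨cg, hcg0, hcgmem, hcgcons, hcglast⟩ :=
    chainT_realize (fun j => L s(j + 1, j + 1 + 1)) cb (n - 3) hMg t htT
  obtain ⟨u, huT, hue⟩ := avail (chainT_nonempty _ c0 (m - 3) hMf) hTFne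
  obtain ⟨cf, hcf0, hcfmem, hcfcons, hcflast⟩ :=
    chainT_realize (fun j => L s(n + j, n + j + 1)) c0 (m - 3) hMf u huT
  have hgd : cg (n - 3) ≠ cd := by rw [hcglast]; exact htd
  have hfe : cf (m - 3) ≠ ce := by rw [hcflast]; exact hue
  -- (chain membership facts are already beta-reduced)
  -- the colouring
  set Col := CCol n cb c0 cd ce cg cf with hColdef
  have eA : ∀ i, i ≤ n - 2 → Col s(i, i + 1) = if i = 0 then cb else cg (i - 1) := by
    intro i hi
    rw [hColdef, CCol_mk, min_eq_left (Nat.le_succ i), max_eq_right (Nat.le_succ i)]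
    by_cases h0 : i = 0
    · subst h0
      simp [FCol]
    · have h1 : FCol n cb c0 cd ce cg cf i (i + 1) = cg (i - 1) := by
        simp only [FCol]
        rw [if_neg h0, if_pos hi]
      rw [h1, if_neg h0]
  have eB : Col s(n - 1, 0) = cd := by
    rw [hColdef, CCol_mk, min_eq_right (Nat.zero_le _), max_eq_left (Nat.zero_le _)]
    simp only [FCol]
    rw [if_neg (by omega : ¬ (n - 1 = 1))]
    simp
  have eC : Col s(0, n) = c0 := by
    rw [hColdef, CCol_mk, min_eq_left (Nat.zero_le _), max_eq_right (Nat.zero_le _)]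
    simp only [FCol]
    rw [if_neg (by omega : ¬ (n = 1)), if_neg (by omega : ¬ (n = n - 1))]
    simp
  have eE : Col s(n + m - 2, 0) = ce := by
    rw [hColdef, CCol_mk, min_eq_right (Nat.zero_le _), max_eq_left (Nat.zero_le _)]
    simp only [FCol]
    rw [if_neg (by omega : ¬ (n + m - 2 = 1)),
      if_neg (by omega : ¬ (n + m - 2 = n - 1)), if_neg (by omega : ¬ (n + m - 2 = n))]
    simp
  have eD : ∀ j, j ≤ m - 3 → Col s(n + j, n + j + 1) = cf j := by
    intro j hj
    rw [hColdef, CCol_mk, min_eq_left (Nat.le_succ _), max_eq_right (Nat.le_succ _)]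
    simp only [FCol]
    rw [if_neg (by omega : ¬ (n + j = 0)), if_neg (by omega : ¬ (n + j ≤ n - 2)),
      show n + j - n = j from by omega]
  refine ⟨Col, ?_, ?_⟩
  · -- colours come from the lists
    intro ed hed
    rcases classify ed hed with ⟨i, hi, rfl⟩ | rfl | rfl | ⟨j, hj, rfl⟩ | rfl
    · rw [eA i hi]
      by_cases h0 : i = 0
      · subst h0
        rw [if_pos rfl]
        exact hcbB
      · rw [if_neg h0]
        have h2 := hcgmem (i - 1) (by omega)
        rw [show i - 1 + 1 = i from by omega] at h2
        exact h2
    · rw [eB]; exact hcdD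
    · rw [eC]; exact hc0C
    · rw [eD j hj]
      exact hcfmem j hj
    · rw [eE]; exact hceE
  · -- properness
    intro ed fd hadj
    obtain ⟨hed, hfd, hnef, w, hw1, hw2⟩ := hadj
    rcases classify ed hed with ⟨i, hi, rfl⟩ | rfl | rfl | ⟨j, hj, rfl⟩ | rfl <;>
      rcases classify fd hfd with ⟨i', hi', rfl⟩ | rfl | rfl | ⟨j', hj', rfl⟩ | rfl <;>
      rw [Sym2.mem_iff] at hw1 hw2
    -- A A
    · have hii : i ≠ i' := fun h => hnef (by rw [h])
      have hkey : i' = i + 1 ∨ i = i' + 1 := by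
        rcases hw1 with h1 | h1 <;> rcases hw2 with h2 | h2 <;> omega
      rw [eA i hi, eA i' hi']
      rcases hkey with h | h
      · subst h
        rw [if_neg (by omega : ¬ (i + 1 = 0))]
        by_cases h0 : i = 0
        · rw [if_pos h0, show i + 1 - 1 = i from by omega, h0]
          exact fun hcon => hcg0 hcon.symm
        · rw [if_neg h0, show i + 1 - 1 = i from by omega]
          have := hcgcons (i - 1) (by omega)
          rw [show i - 1 + 1 = i from by omega] at this
          exact this
      · subst h
        rw [if_neg (by omega : ¬ (i' + 1 = 0))]
        by_cases h0 : i' = 0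
        · rw [if_pos h0, show i' + 1 - 1 = i' from by omega, h0]
          exact hcg0
        · rw [if_neg h0, show i' + 1 - 1 = i' from by omega]
          have := hcgcons (i' - 1) (by omega)
          rw [show i' - 1 + 1 = i' from by omega] at this
          exact fun hcon => this hcon.symm
    -- A B
    · have hkey : i = 0 ∨ i + 1 = n - 1 := by
        rcases hw1 with h1 | h1 <;> rcases hw2 with h2 | h2 <;> omega
      rw [eA i hi, eB]
      rcases hkey with h | h
      · rw [if_pos h]; exact hbd
      · rw [if_neg (by omega : ¬ (i = 0)), show i - 1 = n - 3 from by omega]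
        exact hgd
    -- A C
    · have hkey : i = 0 := by
        rcases hw1 with h1 | h1 <;> rcases hw2 with h2 | h2 <;> omega
      rw [eA i hi, eC, if_pos hkey]
      exact hbc
    -- A D
    · exfalso
      rcases hw1 with h1 | h1 <;> rcases hw2 with h2 | h2 <;> omega
    -- A E
    · have hkey : i = 0 := by
        rcases hw1 with h1 | h1 <;> rcases hw2 with h2 | h2 <;> omega
      rw [eA i hi, eE, if_pos hkey]
      exact hbe
    -- B A
    · have hkey : i' = 0 ∨ i' + 1 = n - 1 := by
        rcases hw1 with h1 | h1 <;> rcases hw2 with h2 | h2 <;> omega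
      rw [eA i' hi', eB]
      rcases hkey with h | h
      · rw [if_pos h]; exact fun hcon => hbd hcon.symm
      · rw [if_neg (by omega : ¬ (i' = 0)), show i' - 1 = n - 3 from by omega]
        exact fun hcon => hgd hcon.symm
    -- B B
    · exact absurd rfl hnef
    -- B C
    · rw [eB, eC]
      exact fun hcon => hcd hcon.symm
    -- B D
    · exfalso
      rcases hw1 with h1 | h1 <;> rcases hw2 with h2 | h2 <;> omega
    -- B E
    · rw [eB, eE]
      exact hde
    -- C A
    · have hkey : i' = 0 := by
        rcases hw1 with h1 | h1 <;> rcases hw2 with h2 | h2 <;> omega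
      rw [eA i' hi', eC, if_pos hkey]
      exact fun hcon => hbc hcon.symm
    -- C B
    · rw [eB, eC]
      exact hcd
    -- C C
    · exact absurd rfl hnef
    -- C D
    · have hkey : j' = 0 := by
        rcases hw1 with h1 | h1 <;> rcases hw2 with h2 | h2 <;> omega
      rw [eC, eD j' hj', hkey]
      exact fun hcon => hcf0 hcon.symm
    -- C E
    · rw [eC, eE]
      exact hce
    -- D A
    · exfalso
      rcases hw1 with h1 | h1 <;> rcases hw2 with h2 | h2 <;> omega
    -- D B
    · exfalso
      rcases hw1 with h1 | h1 <;> rcases hw2 with h2 | h2 <;> omega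
    -- D C
    · have hkey : j = 0 := by
        rcases hw1 with h1 | h1 <;> rcases hw2 with h2 | h2 <;> omega
      rw [eC, eD j hj, hkey]
      exact hcf0
    -- D D
    · have hjj : j ≠ j' := fun h => hnef (by rw [h])
      have hkey : j' = j + 1 ∨ j = j' + 1 := by
        rcases hw1 with h1 | h1 <;> rcases hw2 with h2 | h2 <;> omega
      rw [eD j hj, eD j' hj']
      rcases hkey with h | h
      · subst h
        exact hcfcons j (by omega)
      · subst h
        exact fun hcon => (hcfcons j' (by omega)) hcon.symm
    -- D E
    · have hkey : j = m - 3 := by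
        rcases hw1 with h1 | h1 <;> rcases hw2 with h2 | h2 <;> omega
      rw [eD j hj, eE, hkey]
      exact hfe
    -- E A
    · have hkey : i' = 0 := by
        rcases hw1 with h1 | h1 <;> rcases hw2 with h2 | h2 <;> omega
      rw [eA i' hi', eE, if_pos hkey]
      exact fun hcon => hbe hcon.symm
    -- E B
    · rw [eB, eE]
      exact fun hcon => hde hcon.symm
    -- E C
    · rw [eC, eE]
      exact fun hcon => hce hcon.symm
    -- E D
    · have hkey : j' = m - 3 := by
        rcases hw1 with h1 | h1 <;> rcases hw2 with h2 | h2 <;> omega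
      rw [eD j' hj', eE, hkey]
      exact fun hcon => hfe hcon.symm
    -- E E
    · exact absurd rfl hnef
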